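/- arXiv:1701.01194 — 4 statements merged into one kernel-verified Lean document; each statement's English description precedes it below -/
import Mathlib

section
/- The function φ(x) := 1/sinh²(x) − 1/x² is strictly increasing on (0, ∞). -/
open Real Set

/-- Canonical form for the functions in our derivative chain. -/
noncomputable def auxG (a₁ a₂ s₀ s₁ s₂ s₃ c₀ c₁ c₂ c₃ : ℝ) : ℝ → ℝ := fun x =>
  a₁ * Real.sinh (3 * x) + a₂ * Real.cosh (3 * x)
    + (s₀ + s₁ * x + s₂ * x ^ 2 + s₃ * x ^ 3) * Real.sinh x
    + (c₀ + c₁ * x + c₂ * x ^ 2 + c₃ * x ^ 3) * Real.cosh x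

lemma auxG_hasDerivAt (a₁ a₂ s₀ s₁ s₂ s₃ c₀ c₁ c₂ c₃ x : ℝ) :
    HasDerivAt (auxG a₁ a₂ s₀ s₁ s₂ s₃ c₀ c₁ c₂ c₃)
      (auxG (3 * a₂) (3 * a₁) (c₀ + s₁) (c₁ + 2 * s₂) (c₂ + 3 * s₃) c₃
        (s₀ + c₁) (s₁ + 2 * c₂) (s₂ + 3 * c₃) s₃ x) x := by
  have h3 : HasDerivAt (fun y : ℝ => 3 * y) 3 x := by
    simpa using (hasDerivAt_id x).const_mul (3 : ℝ)
  have h3s : HasDerivAt (fun y : ℝ => Real.sinh (3 * y)) (Real.cosh (3 * x) * 3) x :=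
    h3.sinh
  have h3c : HasDerivAt (fun y : ℝ => Real.cosh (3 * y)) (Real.sinh (3 * x) * 3) x :=
    h3.cosh
  have hP : HasDerivAt (fun y : ℝ => s₀ + s₁ * y + s₂ * y ^ 2 + s₃ * y ^ 3)
      (s₁ + 2 * s₂ * x + 3 * s₃ * x ^ 2) x := by
    have h := (((hasDerivAt_const x s₀).add ((hasDerivAt_id x).const_mul s₁)).add
        ((hasDerivAt_pow 2 x).const_mul s₂)).add ((hasDerivAt_pow 3 x).const_mul s₃)
    refine h.congr_deriv ?_
    push_cast; ring
  have hQ : HasDerivAt (fun y : ℝ => c₀ + c₁ * y + c₂ * y ^ 2 + c₃ * y ^ 3)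
      (c₁ + 2 * c₂ * x + 3 * c₃ * x ^ 2) x := by
    have h := (((hasDerivAt_const x c₀).add ((hasDerivAt_id x).const_mul c₁)).add
        ((hasDerivAt_pow 2 x).const_mul c₂)).add ((hasDerivAt_pow 3 x).const_mul c₃)
    refine h.congr_deriv ?_
    push_cast; ring
  have H := (((h3s.const_mul a₁).add (h3c.const_mul a₂)).add
      (hP.mul (Real.hasDerivAt_sinh x))).add (hQ.mul (Real.hasDerivAt_cosh x))
  refine H.congr_deriv ?_
  simp only [auxG]
  ring

lemma auxG_zero (a₁ a₂ s₀ s₁ s₂ s₃ c₀ c₁ c₂ c₃ : ℝ) :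
    auxG a₁ a₂ s₀ s₁ s₂ s₃ c₀ c₁ c₂ c₃ 0 = a₂ + c₀ := by
  simp [auxG]

/-- Chain step: positivity of the derivative plus vanishing at `0` gives positivity. -/
lemma auxG_pos (a₁ a₂ s₀ s₁ s₂ s₃ c₀ c₁ c₂ c₃ : ℝ) (h0 : a₂ + c₀ = 0)
    (hp : ∀ x : ℝ, 0 < x → 0 < auxG (3 * a₂) (3 * a₁) (c₀ + s₁) (c₁ + 2 * s₂)
      (c₂ + 3 * s₃) c₃ (s₀ + c₁) (s₁ + 2 * c₂) (s₂ + 3 * c₃) s₃ x) :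
    ∀ x : ℝ, 0 < x → 0 < auxG a₁ a₂ s₀ s₁ s₂ s₃ c₀ c₁ c₂ c₃ x := by
  intro x hx
  have mono : StrictMonoOn (auxG a₁ a₂ s₀ s₁ s₂ s₃ c₀ c₁ c₂ c₃) (Set.Ici 0) := by
    apply strictMonoOn_of_deriv_pos (convex_Ici 0)
    · exact fun y _ =>
        (auxG_hasDerivAt a₁ a₂ s₀ s₁ s₂ s₃ c₀ c₁ c₂ c₃ y).differentiableAt.continuousAt.continuousWithinAt
    · intro y hy
      rw [interior_Ici] at hy
      rw [(auxG_hasDerivAt a₁ a₂ s₀ s₁ s₂ s₃ c₀ c₁ c₂ c₃ y).deriv]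
      exact hp y hy
  have h := mono Set.self_mem_Ici (Set.mem_Ici.mpr hx.le) hx
  rw [auxG_zero, h0] at h
  exact h

lemma cosh_quad {x : ℝ} (hx : 0 ≤ x) : 1 + x ^ 2 / 4 ≤ Real.cosh x := by
  rw [Real.cosh_eq]
  have h1 := Real.quadratic_le_exp_of_nonneg hx
  have h2 := Real.add_one_le_exp (-x)
  nlinarith

lemma sinh_le_mul_cosh {x : ℝ} (hx : 0 ≤ x) : Real.sinh x ≤ x * Real.cosh x := by
  have key : ∀ y : ℝ, HasDerivAt (fun y : ℝ => y * Real.cosh y - Real.sinh y)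
      (y * Real.sinh y) y := by
    intro y
    have h := ((hasDerivAt_id y).mul (Real.hasDerivAt_cosh y)).sub (Real.hasDerivAt_sinh y)
    refine h.congr_deriv ?_
    simp only [id_eq]
    ring
  have mono : MonotoneOn (fun y : ℝ => y * Real.cosh y - Real.sinh y) (Set.Ici 0) := by
    apply monotoneOn_of_deriv_nonneg (convex_Ici 0)
    · exact fun y _ => (key y).differentiableAt.continuousAt.continuousWithinAt
    · exact fun y _ => (key y).differentiableAt.differentiableWithinAt
    · intro y hy
      rw [interior_Ici] at hy
      rw [(key y).deriv]
      exact mul_nonneg hy.le (Real.sinh_nonneg_iff.mpr hy.le)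
  have h := mono Set.self_mem_Ici (Set.mem_Ici.mpr hx) hx
  simp only [Real.cosh_zero, Real.sinh_zero, mul_one, zero_mul, sub_zero] at h
  linarith

lemma g7_pos : ∀ x : ℝ, 0 < x →
    0 < auxG 0 2187 0 (-504) 0 (-4) (-843) 0 (-84) 0 x := by
  intro x hx
  simp only [auxG]
  have hc := Real.cosh_pos x
  have hs : 0 ≤ Real.sinh x := Real.sinh_nonneg_iff.mpr hx.le
  have hsc : Real.sinh x ≤ x * Real.cosh x := sinh_le_mul_cosh hx.le
  have h3 : Real.cosh (3 * x) = 4 * Real.cosh x ^ 3 - 3 * Real.cosh x :=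
    Real.cosh_three_mul x
  have hq : 1 + x ^ 2 / 4 ≤ Real.cosh x := cosh_quad hx.le
  have hq2 : (1 + x ^ 2 / 4) ^ 2 ≤ Real.cosh x ^ 2 := by nlinarith
  have hq3 : (1 + x ^ 2 / 4) ^ 2 * Real.cosh x ≤ Real.cosh x ^ 2 * Real.cosh x :=
    mul_le_mul_of_nonneg_right hq2 hc.le
  have hmul : (504 * x + 4 * x ^ 3) * Real.sinh x ≤ (504 * x + 4 * x ^ 3) * (x * Real.cosh x) := by
    apply mul_le_mul_of_nonneg_left hsc
    positivity
  rw [h3]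
  nlinarith [mul_pos hx hc, mul_nonneg (mul_nonneg (sq_nonneg x) (sq_nonneg x)) hc.le,
    mul_nonneg (sq_nonneg x) hc.le]

lemma g0_pos : ∀ x : ℝ, 0 < x →
    0 < auxG 1 0 (-3) 0 0 0 0 0 0 (-4) x := by
  apply auxG_pos _ _ _ _ _ _ _ _ _ _ (by norm_num)
  apply auxG_pos _ _ _ _ _ _ _ _ _ _ (by norm_num)
  apply auxG_pos _ _ _ _ _ _ _ _ _ _ (by norm_num)
  apply auxG_pos _ _ _ _ _ _ _ _ _ _ (by norm_num)
  apply auxG_pos _ _ _ _ _ _ _ _ _ _ (by norm_num)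
  apply auxG_pos _ _ _ _ _ _ _ _ _ _ (by norm_num)
  apply auxG_pos _ _ _ _ _ _ _ _ _ _ (by norm_num)
  have := g7_pos
  norm_num at this ⊢
  exact this

/-- The key inequality: `x³ cosh x < sinh³ x` for `x > 0`. -/
lemma cube_cosh_lt_sinh_cube {x : ℝ} (hx : 0 < x) :
    x ^ 3 * Real.cosh x < Real.sinh x ^ 3 := by
  have h := g0_pos x hx
  simp only [auxG] at h
  have h3 : Real.sinh (3 * x) = 4 * Real.sinh x ^ 3 + 3 * Real.sinh x :=
    Real.sinh_three_mul x
  nlinarith [h, h3]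

/-- The function `φ(x) = 1/sinh² x - 1/x²` is strictly increasing on `(0, ∞)`. -/
theorem strictMonoOn_inv_sinh_sq_sub_inv_sq :
    StrictMonoOn (fun x : ℝ => 1 / Real.sinh x ^ 2 - 1 / x ^ 2) (Set.Ioi 0) := by
  have hd : ∀ x : ℝ, 0 < x → HasDerivAt (fun x : ℝ => 1 / Real.sinh x ^ 2 - 1 / x ^ 2)
      (2 / x ^ 3 - 2 * Real.cosh x / Real.sinh x ^ 3) x := by
    intro x hx
    have hs : 0 < Real.sinh x := Real.sinh_pos_iff.mpr hx
    have hs2 : Real.sinh x ^ 2 ≠ 0 := pow_ne_zero 2 hs.ne'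
    have hx2 : x ^ 2 ≠ 0 := pow_ne_zero 2 hx.ne'
    have h1 : HasDerivAt (fun y : ℝ => Real.sinh y ^ 2)
        (2 * Real.sinh x ^ 1 * Real.cosh x) x := (Real.hasDerivAt_sinh x).pow 2
    have h2 : HasDerivAt (fun y : ℝ => 1 / Real.sinh y ^ 2)
        ((0 * Real.sinh x ^ 2 - 1 * (2 * Real.sinh x ^ 1 * Real.cosh x)) /
          (Real.sinh x ^ 2) ^ 2) x := (hasDerivAt_const x 1).div h1 hs2
    have h3 : HasDerivAt (fun y : ℝ => y ^ 2) (2 * x ^ 1) x := by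
      simpa using hasDerivAt_pow 2 x
    have h4 : HasDerivAt (fun y : ℝ => 1 / y ^ 2)
        ((0 * x ^ 2 - 1 * (2 * x ^ 1)) / (x ^ 2) ^ 2) x :=
      (hasDerivAt_const x 1).div h3 hx2
    have H := h2.sub h4
    refine H.congr_deriv ?_
    field_simp
    ring
  apply strictMonoOn_of_deriv_pos (convex_Ioi 0)
  · apply ContinuousOn.sub
    · apply ContinuousOn.div continuousOn_const
      · exact (Real.continuous_sinh.pow 2).continuousOn
      · intro x hx
        exact pow_ne_zero 2 (Real.sinh_pos_iff.mpr hx).ne'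
    · apply ContinuousOn.div continuousOn_const
      · exact (continuous_pow 2).continuousOn
      · intro x hx
        exact pow_ne_zero 2 (ne_of_gt hx)
  · intro x hx
    rw [interior_Ioi] at hx
    rw [(hd x hx).deriv]
    have hs : 0 < Real.sinh x := Real.sinh_pos_iff.mpr hx
    have key := cube_cosh_lt_sinh_cube hx
    rw [sub_pos, div_lt_div_iff₀ (pow_pos hs 3) (pow_pos hx 3)]
    nlinarith
end

section
/- Fix y > 0 and define p(t,x) := (e^{−t/2}/√(2πt)) · (sinh(y)/sinh(x)) · ( e^{−(x−y)²/(2t)} − e^{−(x+y)²/(2t)} ) for t > 0 and x > 0. Then p satisfies the backward Kolmogorov equation of the hyperbolic Bessel process of order 3: for all t > 0 and x > 0, ∂_t p(t,x) = (1/2) ∂_x² p(t,x) + coth(x) · ∂_x p(t,x), where coth(x) = cosh(x)/sinh(x). -/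
/-- For fixed `y > 0`, the transition density
`p(t,x) = (e^{-t/2}/√(2πt)) (sinh y / sinh x)(e^{-(x-y)²/(2t)} - e^{-(x+y)²/(2t)})`
of the hyperbolic Bessel process of order `3` satisfies the backward Kolmogorov equation
`∂_t p = (1/2) ∂_x² p + coth x · ∂_x p` for all `t > 0`, `x > 0`. -/
theorem hyperbolic_bessel3_backward_kolmogorov (y : ℝ) (hy : 0 < y) (p : ℝ → ℝ → ℝ)
    (hp : ∀ t x : ℝ, p t x =
      (Real.exp (-t / 2) / Real.sqrt (2 * Real.pi * t)) * (Real.sinh y / Real.sinh x) *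
        (Real.exp (-(x - y) ^ 2 / (2 * t)) - Real.exp (-(x + y) ^ 2 / (2 * t)))) :
    ∀ t x : ℝ, 0 < t → 0 < x →
      deriv (fun s => p s x) t =
        (1 / 2) * deriv (fun z => deriv (fun w => p t w) z) x +
          (Real.cosh x / Real.sinh x) * deriv (fun z => p t z) x := by
  intro t x ht hx
  have hπ : (0:ℝ) < Real.pi := Real.pi_pos
  have hsx : Real.sinh x ≠ 0 := Real.sinh_ne_zero.2 (ne_of_gt hx)
  have ht0 : t ≠ 0 := ne_of_gt ht
  have hgpos : 0 < Real.sqrt (2 * Real.pi * t) := Real.sqrt_pos.2 (by positivity)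
  have hgne : Real.sqrt (2 * Real.pi * t) ≠ 0 := ne_of_gt hgpos
  set A : ℝ := Real.exp (-t / 2) / Real.sqrt (2 * Real.pi * t) with hA
  -- spatial Gaussian factors
  have hE1 : ∀ z : ℝ, HasDerivAt (fun w : ℝ => Real.exp (-(w - y) ^ 2 / (2 * t)))
      (Real.exp (-(z - y) ^ 2 / (2 * t)) * (-(z - y) / t)) z := by
    intro z
    have h := ((((hasDerivAt_id' z).sub_const y).pow 2).neg.div_const (2*t)).exp
    refine h.congr_deriv ?_
    simp only [Pi.neg_apply, Pi.pow_apply]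
    push_cast
    field_simp
  have hE2 : ∀ z : ℝ, HasDerivAt (fun w : ℝ => Real.exp (-(w + y) ^ 2 / (2 * t)))
      (Real.exp (-(z + y) ^ 2 / (2 * t)) * (-(z + y) / t)) z := by
    intro z
    have h := ((((hasDerivAt_id' z).add_const y).pow 2).neg.div_const (2*t)).exp
    refine h.congr_deriv ?_
    simp only [Pi.neg_apply, Pi.pow_apply]
    push_cast
    field_simp
  -- the spatial first derivative function
  set F : ℝ → ℝ := fun z => A * Real.sinh y *
      (-Real.cosh z / Real.sinh z ^ 2 *
          (Real.exp (-(z - y) ^ 2 / (2 * t)) - Real.exp (-(z + y) ^ 2 / (2 * t))) +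
        (Real.sinh z)⁻¹ *
          (Real.exp (-(z - y) ^ 2 / (2 * t)) * (-(z - y) / t) -
            Real.exp (-(z + y) ^ 2 / (2 * t)) * (-(z + y) / t))) with hF
  have hFx : ∀ z : ℝ, z ≠ 0 → HasDerivAt (fun w => p t w) (F z) z := by
    intro z hz
    have hsz : Real.sinh z ≠ 0 := Real.sinh_ne_zero.2 hz
    have hfun : (fun w => p t w) = fun w =>
        A * (Real.sinh y / Real.sinh w) *
          (Real.exp (-(w - y) ^ 2 / (2 * t)) - Real.exp (-(w + y) ^ 2 / (2 * t))) :=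
      funext fun w => by rw [hp t w, ← hA]
    rw [hfun]
    have hQ : HasDerivAt (fun w => Real.sinh y / Real.sinh w)
        ((0 * Real.sinh z - Real.sinh y * Real.cosh z) / Real.sinh z ^ 2) z :=
      (hasDerivAt_const z (Real.sinh y)).div (Real.hasDerivAt_sinh z) hsz
    have h := (hQ.const_mul A).mul ((hE1 z).sub (hE2 z))
    refine h.congr_deriv ?_
    simp only [hF, Pi.mul_apply, Pi.sub_apply]
    field_simp
    ring
  have hevent : (fun z => deriv (fun w => p t w) z) =ᶠ[nhds x] F := by
    filter_upwards [eventually_ne_nhds (ne_of_gt hx)] with z hz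
    exact (hFx z hz).deriv
  have h2nd : deriv (fun z => deriv (fun w => p t w) z) x = deriv F x :=
    hevent.deriv_eq
  have hd1 : deriv (fun z => p t z) x = F x := (hFx x (ne_of_gt hx)).deriv
  -- second spatial derivative of F at x
  have h1 := ((Real.hasDerivAt_cosh x).neg.div ((Real.hasDerivAt_sinh x).pow 2)
    (pow_ne_zero 2 hsx)).mul ((hE1 x).sub (hE2 x))
  have hlin1 : HasDerivAt (fun w : ℝ => -(w - y) / t) (-1 / t) x := by
    have := (((hasDerivAt_id' x).sub_const y).neg).div_const t
    exact this
  have hlin2 : HasDerivAt (fun w : ℝ => -(w + y) / t) (-1 / t) x := by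
    have := (((hasDerivAt_id' x).add_const y).neg).div_const t
    exact this
  have h4 := ((Real.hasDerivAt_sinh x).inv hsx).mul
    (((hE1 x).mul hlin1).sub ((hE2 x).mul hlin2))
  have hFd := (h1.add h4).const_mul (A * Real.sinh y)
  -- time derivative
  have hfunT : (fun s => p s x) = fun s =>
      Real.exp (-s / 2) / Real.sqrt (2 * Real.pi * s) * (Real.sinh y / Real.sinh x) *
        (Real.exp (-(x - y) ^ 2 / (2 * s)) - Real.exp (-(x + y) ^ 2 / (2 * s))) :=
    funext fun s => hp s x
  have hexp : HasDerivAt (fun s : ℝ => Real.exp (-s / 2))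
      (Real.exp (-t / 2) * (-1 / 2)) t := by
    have := (((hasDerivAt_id' t).neg).div_const 2).exp
    exact this
  have hsqrt : HasDerivAt (fun s : ℝ => Real.sqrt (2 * Real.pi * s))
      (2 * Real.pi * 1 / (2 * Real.sqrt (2 * Real.pi * t))) t := by
    have h0 : (2 * Real.pi * t : ℝ) ≠ 0 := by positivity
    exact ((hasDerivAt_id' t).const_mul (2 * Real.pi)).sqrt h0
  have hquot := hexp.div hsqrt hgne
  have h2tne : (2 * t : ℝ) ≠ 0 := by positivity
  have hE1t : HasDerivAt (fun s : ℝ => Real.exp (-(x - y) ^ 2 / (2 * s)))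
      (Real.exp (-(x - y) ^ 2 / (2 * t)) *
        ((0 * (2 * t) - -(x - y) ^ 2 * (2 * 1)) / (2 * t) ^ 2)) t :=
    ((hasDerivAt_const t (-(x - y) ^ 2)).div ((hasDerivAt_id' t).const_mul 2) h2tne).exp
  have hE2t : HasDerivAt (fun s : ℝ => Real.exp (-(x + y) ^ 2 / (2 * s)))
      (Real.exp (-(x + y) ^ 2 / (2 * t)) *
        ((0 * (2 * t) - -(x + y) ^ 2 * (2 * 1)) / (2 * t) ^ 2)) t :=
    ((hasDerivAt_const t (-(x + y) ^ 2)).div ((hasDerivAt_id' t).const_mul 2) h2tne).exp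
  have hT := (hquot.mul_const (Real.sinh y / Real.sinh x)).mul (hE1t.sub hE2t)
  rw [h2nd, hd1, hfunT]
  erw [hT.deriv]
  simp only [hF]
  erw [hFd.deriv]
  simp only [Pi.pow_apply, Pi.inv_apply, Pi.neg_apply, Pi.div_apply, Pi.mul_apply, Pi.sub_apply, Pi.add_apply]
  push_cast
  simp only [hA]
  have hgsq : Real.sqrt (2 * Real.pi * t) ^ 2 = 2 * Real.pi * t :=
    Real.sq_sqrt (by positivity)
  set g := Real.sqrt (2 * Real.pi * t) with hg
  have htg : t = g ^ 2 / (2 * Real.pi) := by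
    rw [hgsq]; field_simp
  rw [htg]
  have hπ0 : Real.pi ≠ 0 := ne_of_gt hπ
  have hg0 : g ≠ 0 := hgne
  field_simp
  ring
end

section
/- Fix x > 0 and define p(t,y) := (e^{−t/2}/√(2πt)) · (sinh(y)/sinh(x)) · ( e^{−(x−y)²/(2t)} − e^{−(x+y)²/(2t)} ) for t > 0 and y > 0. Then p satisfies the forward Kolmogorov (Fokker–Planck) equation of the hyperbolic Bessel process of order 3: for all t > 0 and y > 0, ∂_t p(t,y) = (1/2) ∂_y² p(t,y) − ∂_y ( coth(y) · p(t,y) ), where coth(y) = cosh(y)/sinh(y). -/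
private lemma aux_em (x t : ℝ) (ht : t ≠ 0) (z : ℝ) :
    HasDerivAt (fun w => Real.exp (-(x - w) ^ 2 / (2 * t)))
      (Real.exp (-(x - z) ^ 2 / (2 * t)) * ((x - z) / t)) z := by
  have h := ((((hasDerivAt_id z).const_sub x).pow 2).neg.div_const (2 * t)).exp
  refine (h.congr_deriv ?_).congr_deriv rfl
  simp only [Pi.pow_apply, Pi.neg_apply, Pi.sub_apply, Pi.add_apply, Pi.mul_apply, Pi.div_apply, id]
  field_simp
  ring

private lemma aux_ep (x t : ℝ) (ht : t ≠ 0) (z : ℝ) :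
    HasDerivAt (fun w => Real.exp (-(x + w) ^ 2 / (2 * t)))
      (Real.exp (-(x + z) ^ 2 / (2 * t)) * (-(x + z) / t)) z := by
  have h := ((((hasDerivAt_id z).const_add x).pow 2).neg.div_const (2 * t)).exp
  refine (h.congr_deriv ?_).congr_deriv rfl
  simp only [Pi.pow_apply, Pi.neg_apply, Pi.sub_apply, Pi.add_apply, Pi.mul_apply, Pi.div_apply, id]
  field_simp
  ring

private lemma aux_emt (a t : ℝ) (ht : 0 < t) :
    HasDerivAt (fun s => Real.exp (-a ^ 2 / (2 * s)))
      (Real.exp (-a ^ 2 / (2 * t)) * (a ^ 2 / (2 * t ^ 2))) t := by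
  have h2 : HasDerivAt (fun s : ℝ => 2 * s) 2 t := by
    simpa using (hasDerivAt_id t).const_mul (2 : ℝ)
  have h := ((hasDerivAt_const t (-a ^ 2)).div h2 (by positivity)).exp
  refine (h.congr_deriv ?_).congr_deriv rfl
  simp only [Pi.pow_apply, Pi.neg_apply, Pi.sub_apply, Pi.add_apply, Pi.mul_apply, Pi.div_apply, id]
  field_simp
  ring

/-- The first spatial derivative of the density. -/
noncomputable def hypF1 (x t : ℝ) : ℝ → ℝ := fun z =>
  Real.exp (-t / 2) / Real.sqrt (2 * Real.pi * t) *
    ((Real.cosh z / Real.sinh x) *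
        (Real.exp (-(x - z) ^ 2 / (2 * t)) - Real.exp (-(x + z) ^ 2 / (2 * t))) +
      (Real.sinh z / Real.sinh x) *
        (Real.exp (-(x - z) ^ 2 / (2 * t)) * ((x - z) / t) +
          Real.exp (-(x + z) ^ 2 / (2 * t)) * ((x + z) / t)))

private lemma hasDerivAt_hypP (x t : ℝ) (ht : t ≠ 0) (z : ℝ) :
    HasDerivAt (fun w =>
        Real.exp (-t / 2) / Real.sqrt (2 * Real.pi * t) * (Real.sinh w / Real.sinh x) *
          (Real.exp (-(x - w) ^ 2 / (2 * t)) - Real.exp (-(x + w) ^ 2 / (2 * t))))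
      (hypF1 x t z) z := by
  have h := (HasDerivAt.const_mul (Real.exp (-t / 2) / Real.sqrt (2 * Real.pi * t))
      ((Real.hasDerivAt_sinh z).div_const (Real.sinh x))).mul
      ((aux_em x t ht z).sub (aux_ep x t ht z))
  refine (h.congr_deriv ?_).congr_deriv rfl
  simp only [hypF1, Pi.pow_apply, Pi.neg_apply, Pi.sub_apply, Pi.add_apply, Pi.mul_apply, Pi.div_apply, id]
  ring

set_option maxHeartbeats 2000000 in
/-- For fixed `x > 0`, the transition density
`p(t,y) = (e^{-t/2}/√(2πt)) (sinh y / sinh x)(e^{-(x-y)²/(2t)} - e^{-(x+y)²/(2t)})`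
of the hyperbolic Bessel process of order `3` satisfies the forward Kolmogorov
(Fokker–Planck) equation `∂_t p = (1/2) ∂_y² p - ∂_y (coth y · p)` for all
`t > 0`, `y > 0`. -/
theorem hyperbolic_bessel3_forward_kolmogorov (x : ℝ) (hx : 0 < x) (p : ℝ → ℝ → ℝ)
    (hp : ∀ t y : ℝ, p t y =
      (Real.exp (-t / 2) / Real.sqrt (2 * Real.pi * t)) * (Real.sinh y / Real.sinh x) *
        (Real.exp (-(x - y) ^ 2 / (2 * t)) - Real.exp (-(x + y) ^ 2 / (2 * t)))) :
    ∀ t y : ℝ, 0 < t → 0 < y →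
      deriv (fun s => p s y) t =
        (1 / 2) * deriv (fun z => deriv (fun w => p t w) z) y -
          deriv (fun z => (Real.cosh z / Real.sinh z) * p t z) y := by
  intro t y ht hy
  have ht' : t ≠ 0 := ht.ne'
  have hsx : Real.sinh x ≠ 0 := (Real.sinh_pos_iff.2 hx).ne'
  have h2pit : (0:ℝ) < 2 * Real.pi * t := by positivity
  set S := Real.sqrt (2 * Real.pi * t) with hSdef
  have hS0 : 0 < S := Real.sqrt_pos.2 h2pit
  have hS : S ≠ 0 := hS0.ne'
  have hS2 : S * S = 2 * Real.pi * t := Real.mul_self_sqrt h2pit.le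
  have hpi : Real.pi = S * S / (2 * t) := by rw [hS2]; field_simp
  set E := Real.exp (-t / 2) with hEdef
  set em := Real.exp (-(x - y) ^ 2 / (2 * t)) with hemdef
  set ep := Real.exp (-(x + y) ^ 2 / (2 * t)) with hepdef
  set s := Real.sinh y with hsdef
  set c := Real.cosh y with hcdef
  -- time derivative
  have hT : HasDerivAt (fun u => Real.exp (-u / 2) / Real.sqrt (2 * Real.pi * u) *
        (Real.sinh y / Real.sinh x) *
        (Real.exp (-(x - y) ^ 2 / (2 * u)) - Real.exp (-(x + y) ^ 2 / (2 * u))))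
      (E / S * (s / Real.sinh x) *
          (em * ((x - y) ^ 2 / (2 * t ^ 2)) - ep * ((x + y) ^ 2 / (2 * t ^ 2))) -
        E / S * (1 / 2 + 1 / (2 * t)) * (s / Real.sinh x) * (em - ep)) t := by
    have hnum : HasDerivAt (fun u : ℝ => Real.exp (-u / 2)) (E * (-1 / 2)) t := by
      simpa using ((hasDerivAt_neg t).div_const 2).exp
    have hlin : HasDerivAt (fun u : ℝ => 2 * Real.pi * u) (2 * Real.pi) t := by
      simpa using (hasDerivAt_id t).const_mul (2 * Real.pi)
    have hden : HasDerivAt (fun u : ℝ => Real.sqrt (2 * Real.pi * u))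
        (2 * Real.pi / (2 * S)) t := hlin.sqrt h2pit.ne'
    have hA := hnum.div hden hS
    have h := (hA.mul_const (Real.sinh y / Real.sinh x)).mul
      ((aux_emt (x - y) t ht).sub (aux_emt (x + y) t ht))
    refine (h.congr_deriv ?_).congr_deriv rfl
    simp only [Pi.pow_apply, Pi.neg_apply, Pi.sub_apply, Pi.add_apply, Pi.mul_apply, Pi.div_apply, id, ← hSdef, ← hEdef, ← hemdef, ← hepdef, ← hsdef, ← hcdef]
    rw [hpi]
    field_simp
    ring
  -- second spatial derivative
  have hF1 : HasDerivAt (hypF1 x t)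
      (E / S * ((s / Real.sinh x) * (em - ep) +
          2 * (c / Real.sinh x) * (em * ((x - y) / t) + ep * ((x + y) / t)) +
          (s / Real.sinh x) * (em * ((x - y) ^ 2 / t ^ 2) - em / t -
            ep * ((x + y) ^ 2 / t ^ 2) + ep / t))) y := by
    have hlm : HasDerivAt (fun w : ℝ => (x - w) / t) (-1 / t) y := by
      simpa using ((hasDerivAt_id y).const_sub x).div_const t
    have hlp : HasDerivAt (fun w : ℝ => (x + w) / t) (1 / t) y := by
      simpa using ((hasDerivAt_id y).const_add x).div_const t
    have h1 := ((Real.hasDerivAt_cosh y).div_const (Real.sinh x)).mul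
      ((aux_em x t ht' y).sub (aux_ep x t ht' y))
    have h2 := ((Real.hasDerivAt_sinh y).div_const (Real.sinh x)).mul
      (((aux_em x t ht' y).mul hlm).add ((aux_ep x t ht' y).mul hlp))
    have h := HasDerivAt.const_mul (E / S) (h1.add h2)
    have heq : hypF1 x t = fun z =>
        E / S * ((Real.cosh z / Real.sinh x) *
            (Real.exp (-(x - z) ^ 2 / (2 * t)) - Real.exp (-(x + z) ^ 2 / (2 * t))) +
          (Real.sinh z / Real.sinh x) *
            (Real.exp (-(x - z) ^ 2 / (2 * t)) * ((x - z) / t) +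
              Real.exp (-(x + z) ^ 2 / (2 * t)) * ((x + z) / t))) := rfl
    rw [heq]
    refine (h.congr_deriv ?_).congr_deriv rfl
    simp only [Pi.pow_apply, Pi.neg_apply, Pi.sub_apply, Pi.add_apply, Pi.mul_apply, Pi.div_apply, id, ← hSdef, ← hEdef, ← hemdef, ← hepdef, ← hsdef, ← hcdef]
    field_simp
    ring
  -- derivative of the coth term
  have hG : HasDerivAt (fun z => E / S * (Real.cosh z / Real.sinh x) *
        (Real.exp (-(x - z) ^ 2 / (2 * t)) - Real.exp (-(x + z) ^ 2 / (2 * t))))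
      (E / S * ((s / Real.sinh x) * (em - ep) +
          (c / Real.sinh x) * (em * ((x - y) / t) + ep * ((x + y) / t)))) y := by
    have h := (HasDerivAt.const_mul (E / S)
        ((Real.hasDerivAt_cosh y).div_const (Real.sinh x))).mul
      ((aux_em x t ht' y).sub (aux_ep x t ht' y))
    refine (h.congr_deriv ?_).congr_deriv rfl
    simp only [Pi.pow_apply, Pi.neg_apply, Pi.sub_apply, Pi.add_apply, Pi.mul_apply, Pi.div_apply, id, ← hSdef, ← hEdef, ← hemdef, ← hepdef, ← hsdef, ← hcdef]
    field_simp
    ring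
  -- rewrite the goal
  simp only [hp]
  rw [show (fun z => deriv (fun w =>
      Real.exp (-t / 2) / Real.sqrt (2 * Real.pi * t) * (Real.sinh w / Real.sinh x) *
        (Real.exp (-(x - w) ^ 2 / (2 * t)) - Real.exp (-(x + w) ^ 2 / (2 * t)))) z)
      = hypF1 x t from funext fun z => (hasDerivAt_hypP x t ht' z).deriv]
  have hev : (fun z => Real.cosh z / Real.sinh z *
      (Real.exp (-t / 2) / Real.sqrt (2 * Real.pi * t) * (Real.sinh z / Real.sinh x) *
        (Real.exp (-(x - z) ^ 2 / (2 * t)) - Real.exp (-(x + z) ^ 2 / (2 * t)))))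
      =ᶠ[nhds y] (fun z => E / S * (Real.cosh z / Real.sinh x) *
        (Real.exp (-(x - z) ^ 2 / (2 * t)) - Real.exp (-(x + z) ^ 2 / (2 * t)))) := by
    have h0 : ∀ᶠ z in nhds y, Real.sinh z ≠ 0 :=
      Real.continuous_sinh.continuousAt.eventually_ne (Real.sinh_pos_iff.2 hy).ne'
    filter_upwards [h0] with z hz
    rw [← hEdef, ← hSdef]
    field_simp
  rw [hev.deriv_eq, hG.deriv, hF1.deriv, hT.deriv]
  field_simp
  ring
end

section
/- For every t > 0 and x > 0, ∫₀^∞ (e^{−t/2}/√(2πt)) · (sinh(y)/sinh(x)) · ( e^{−(x−y)²/(2t)} − e^{−(x+y)²/(2t)} ) dy = 1. -/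
open Real MeasureTheory Set

private lemma gauss_integrable {t : ℝ} (ht : 0 < t) (a : ℝ) :
    Integrable (fun y : ℝ => Real.exp (-(y - a) ^ 2 / (2 * t))) := by
  have h : (fun y : ℝ => Real.exp (-(y - a) ^ 2 / (2 * t)))
      = (fun y : ℝ => Real.exp (-(1 / (2 * t)) * y ^ 2)) ∘ (fun y => y - a) := by
    funext y
    simp only [Function.comp_apply]
    congr 1
    field_simp
  rw [h]
  exact (integrable_exp_neg_mul_sq (by positivity)).comp_sub_right a

private lemma gauss_integral {t : ℝ} (ht : 0 < t) (a : ℝ) :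
    ∫ y : ℝ, Real.exp (-(y - a) ^ 2 / (2 * t)) = Real.sqrt (2 * Real.pi * t) := by
  have h : ∀ y : ℝ, Real.exp (-(y - a) ^ 2 / (2 * t))
      = (fun u : ℝ => Real.exp (-(1 / (2 * t)) * u ^ 2)) (y - a) := by
    intro y; congr 1; field_simp
  simp_rw [h]
  rw [integral_sub_right_eq_self (fun u : ℝ => Real.exp (-(1 / (2 * t)) * u ^ 2)) a,
    integral_gaussian]
  congr 1
  field_simp

private lemma gauss_half {t : ℝ} (ht : 0 < t) (a : ℝ) :
    (∫ y in Ioi (0 : ℝ), Real.exp (-(y - a) ^ 2 / (2 * t)))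
      + (∫ y in Ioi (0 : ℝ), Real.exp (-(y + a) ^ 2 / (2 * t)))
      = Real.sqrt (2 * Real.pi * t) := by
  have h2 : (∫ y in Ioi (0 : ℝ), Real.exp (-(y + a) ^ 2 / (2 * t)))
      = ∫ y in Iic (0 : ℝ), Real.exp (-(y - a) ^ 2 / (2 * t)) := by
    have h := integral_comp_neg_Ioi (0 : ℝ) (fun y : ℝ => Real.exp (-(y - a) ^ 2 / (2 * t)))
    simp only [neg_zero] at h
    rw [← h]
    congr 1
    funext y
    congr 2
    ring
  rw [h2, add_comm, intervalIntegral.integral_Iic_add_Ioi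
    ((gauss_integrable ht a).integrableOn)
    ((gauss_integrable ht a).integrableOn), gauss_integral ht a]

/-- The transition density of the hyperbolic Bessel process of order `3` integrates to
`1` in the forward variable. -/
theorem hyperbolic_bessel3_density_integral_eq_one (t x : ℝ) (ht : 0 < t) (hx : 0 < x) :
    ∫ y in Set.Ioi (0 : ℝ),
        (Real.exp (-t / 2) / Real.sqrt (2 * Real.pi * t)) * (Real.sinh y / Real.sinh x) *
          (Real.exp (-(x - y) ^ 2 / (2 * t)) - Real.exp (-(x + y) ^ 2 / (2 * t))) = 1 := by
  have htne : t ≠ 0 := ht.ne'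
  set C := Real.exp (-t / 2) / Real.sqrt (2 * Real.pi * t) with hC
  set b := x + t
  set c := x - t
  -- pointwise identity
  have key : ∀ y : ℝ,
      C * (Real.sinh y / Real.sinh x) *
        (Real.exp (-(x - y) ^ 2 / (2 * t)) - Real.exp (-(x + y) ^ 2 / (2 * t)))
      = (C / (2 * Real.sinh x)) *
        (Real.exp (x + t / 2) *
            (Real.exp (-(y - b) ^ 2 / (2 * t)) + Real.exp (-(y + b) ^ 2 / (2 * t)))
          - Real.exp (-x + t / 2) *
            (Real.exp (-(y - c) ^ 2 / (2 * t)) + Real.exp (-(y + c) ^ 2 / (2 * t)))) := by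
    intro y
    have e1 : Real.exp (x + t / 2) * Real.exp (-(y - b) ^ 2 / (2 * t))
        = Real.exp y * Real.exp (-(x - y) ^ 2 / (2 * t)) := by
      rw [← Real.exp_add, ← Real.exp_add]; congr 1; field_simp; ring
    have e2 : Real.exp (x + t / 2) * Real.exp (-(y + b) ^ 2 / (2 * t))
        = Real.exp (-y) * Real.exp (-(x + y) ^ 2 / (2 * t)) := by
      rw [← Real.exp_add, ← Real.exp_add]; congr 1; field_simp; ring
    have e3 : Real.exp (-x + t / 2) * Real.exp (-(y - c) ^ 2 / (2 * t))
        = Real.exp (-y) * Real.exp (-(x - y) ^ 2 / (2 * t)) := by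
      rw [← Real.exp_add, ← Real.exp_add]; congr 1; field_simp; ring
    have e4 : Real.exp (-x + t / 2) * Real.exp (-(y + c) ^ 2 / (2 * t))
        = Real.exp y * Real.exp (-(x + y) ^ 2 / (2 * t)) := by
      rw [← Real.exp_add, ← Real.exp_add]; congr 1; field_simp; ring
    rw [Real.sinh_eq]
    rw [mul_add, mul_add, e1, e2, e3, e4]
    ring
  simp_rw [key]
  -- integrability facts
  have gi : ∀ a : ℝ, IntegrableOn (fun y : ℝ => Real.exp (-(y - a) ^ 2 / (2 * t))) (Ioi 0) :=
    fun a => (gauss_integrable ht a).integrableOn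
  have gi' : ∀ a : ℝ, IntegrableOn (fun y : ℝ => Real.exp (-(y + a) ^ 2 / (2 * t))) (Ioi 0) := by
    intro a
    have : (fun y : ℝ => Real.exp (-(y + a) ^ 2 / (2 * t)))
        = fun y : ℝ => Real.exp (-(y - (-a)) ^ 2 / (2 * t)) := by
      funext y; congr 2; ring
    rw [this]; exact gi (-a)
  have I1 : IntegrableOn (fun y : ℝ => Real.exp (x + t / 2) *
      (Real.exp (-(y - b) ^ 2 / (2 * t)) + Real.exp (-(y + b) ^ 2 / (2 * t)))) (Ioi 0) :=
    ((gi b).add (gi' b)).const_mul _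
  have I2 : IntegrableOn (fun y : ℝ => Real.exp (-x + t / 2) *
      (Real.exp (-(y - c) ^ 2 / (2 * t)) + Real.exp (-(y + c) ^ 2 / (2 * t)))) (Ioi 0) :=
    ((gi c).add (gi' c)).const_mul _
  rw [integral_const_mul]
  rw [integral_sub I1 I2]
  rw [integral_const_mul, integral_const_mul, integral_add (gi b) (gi' b),
    integral_add (gi c) (gi' c), gauss_half ht b, gauss_half ht c]
  -- final arithmetic
  have hS : (0 : ℝ) < Real.sqrt (2 * Real.pi * t) := by
    apply Real.sqrt_pos.2; positivity
  have h1 : Real.exp (x + t / 2) = Real.exp x * Real.exp (t / 2) := Real.exp_add x (t / 2)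
  have h2 : Real.exp (-x + t / 2) = Real.exp (-x) * Real.exp (t / 2) := Real.exp_add (-x) (t / 2)
  have h3 : Real.exp (-t / 2) * Real.exp (t / 2) = 1 := by
    rw [← Real.exp_add, show -t / 2 + t / 2 = 0 by ring, Real.exp_zero]
  have hd : (0 : ℝ) < Real.exp x - Real.exp (-x) := by
    have := Real.exp_lt_exp.2 (show -x < x by linarith)
    linarith
  rw [hC, Real.sinh_eq, h1, h2]
  field_simp
  have h3' : Real.exp (-(t / 2)) * Real.exp (t / 2) = 1 := by
    rw [← Real.exp_add, neg_add_cancel, Real.exp_zero]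
  linear_combination h3'
end
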